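/- Let n ≥ 1 be an integer, 1 ≤ p < ∞ and 0 ≤ β < n. If f ∈ L^{p,β}(ℝⁿ) belongs to all three subspaces L^{p,β}_0(ℝⁿ), L^{p,β}_∞(ℝⁿ) and L^{p,β}_*(ℝⁿ), then f has continuous translations in the Morrey norm, i.e. ‖f(· − η) − f‖_{L^{p,β}} → 0 as η → 0 in ℝⁿ; equivalently, L^{p,β}_{0,∞,*}(ℝⁿ) ⊂ 𝕃^{p,β}(ℝⁿ). -/

import Mathlib

open MeasureTheory Metric ENNReal Filter

noncomputable def morreyA (n : ℕ) (p β : ℝ)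
    (f : EuclideanSpace ℝ (Fin n) → ℂ)
    (y : EuclideanSpace ℝ (Fin n)) (r : ℝ) : ℝ≥0∞ :=
  ENNReal.ofReal (r ^ (-β)) * ∫⁻ x in ball y r, (‖f x‖₊ : ℝ≥0∞) ^ p

/-- The (global) Morrey norm `‖f‖_{L^{p,β}}`. -/
noncomputable def morreyNorm (n : ℕ) (p β : ℝ)
    (f : EuclideanSpace ℝ (Fin n) → ℂ) : ℝ≥0∞ :=
  ⨆ (y : EuclideanSpace ℝ (Fin n)) (r : ℝ) (_ : 0 < r),
    (morreyA n p β f y r) ^ (1 / p)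

/-- Membership in the vanishing-at-origin subspace `L^{p,β}_0`. -/
def vanishAtOrigin (n : ℕ) (p β : ℝ) (f : EuclideanSpace ℝ (Fin n) → ℂ) : Prop :=
  Tendsto
    (fun t : ℝ => ⨆ (y : EuclideanSpace ℝ (Fin n)) (r : ℝ) (_ : 0 < r) (_ : r ≤ t),
      morreyA n p β f y r)
    (nhdsWithin 0 (Set.Ioi 0)) (nhds 0)

/-- Membership in the vanishing-at-infinity subspace `L^{p,β}_∞`. -/
def vanishAtInfinity (n : ℕ) (p β : ℝ) (f : EuclideanSpace ℝ (Fin n) → ℂ) : Prop :=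
  Tendsto
    (fun t : ℝ => ⨆ (y : EuclideanSpace ℝ (Fin n)) (r : ℝ) (_ : t ≤ r),
      morreyA n p β f y r)
    atTop (nhds 0)

/-- Membership in the truncation subspace `L^{p,β}_*`. -/
def vanishTrunc (n : ℕ) (p β : ℝ) (f : EuclideanSpace ℝ (Fin n) → ℂ) : Prop :=
  Tendsto
    (fun N : ℝ => ⨆ (y : EuclideanSpace ℝ (Fin n)) (r : ℝ) (_ : 0 < r),
      ENNReal.ofReal (r ^ (-β)) *
        ∫⁻ x in ball y r ∩ {x : EuclideanSpace ℝ (Fin n) | N < ‖x‖},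
          (‖f x‖₊ : ℝ≥0∞) ^ p)
    atTop (nhds 0)


lemma mor_aux_rpow_add (p : ℝ) (hp : 0 ≤ p) (a b : ℝ≥0∞) :
    (a + b) ^ p ≤ 2 ^ p * (a ^ p + b ^ p) := by
  calc (a + b) ^ p ≤ (2 * max a b) ^ p := by
        refine ENNReal.rpow_le_rpow ?_ hp
        rw [two_mul]
        exact add_le_add (le_max_left a b) (le_max_right a b)
    _ = 2 ^ p * (max a b) ^ p := ENNReal.mul_rpow_of_nonneg _ _ hp
    _ ≤ 2 ^ p * (a ^ p + b ^ p) := by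
        gcongr
        rcases max_cases a b with ⟨h, _⟩ | ⟨h, _⟩ <;> rw [h]
        · exact le_self_add
        · exact le_add_self

lemma mor_aux_nnnorm_add (p : ℝ) (hp : 0 ≤ p) (u v : ℂ) :
    (‖u + v‖₊ : ℝ≥0∞) ^ p ≤ 2 ^ p * ((‖u‖₊ : ℝ≥0∞) ^ p + (‖v‖₊ : ℝ≥0∞) ^ p) := by
  refine le_trans (ENNReal.rpow_le_rpow ?_ hp) (mor_aux_rpow_add p hp _ _)
  exact_mod_cast nnnorm_add_le u v

lemma mor_aux_nnnorm_sub (p : ℝ) (hp : 0 ≤ p) (u v : ℂ) :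
    (‖u - v‖₊ : ℝ≥0∞) ^ p ≤ 2 ^ p * ((‖u‖₊ : ℝ≥0∞) ^ p + (‖v‖₊ : ℝ≥0∞) ^ p) := by
  refine le_trans (ENNReal.rpow_le_rpow ?_ hp) (mor_aux_rpow_add p hp _ _)
  exact_mod_cast nnnorm_sub_le u v

lemma mor_shift_univ (n : ℕ) (F : EuclideanSpace ℝ (Fin n) → ℝ≥0∞)
    (η : EuclideanSpace ℝ (Fin n)) :
    ∫⁻ x, F (x - η) = ∫⁻ x, F x := by
  simpa [sub_eq_add_neg] using lintegral_add_right_eq_self (μ := volume) F (-η)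

lemma mor_shift_ball (n : ℕ) (F : EuclideanSpace ℝ (Fin n) → ℝ≥0∞)
    (η y : EuclideanSpace ℝ (Fin n)) (r : ℝ) :
    ∫⁻ x in ball y r, F (x - η) = ∫⁻ x in ball (y - η) r, F x := by
  rw [← lintegral_indicator measurableSet_ball, ← lintegral_indicator measurableSet_ball]
  have key : (fun x => (ball y r).indicator (fun z => F (z - η)) x)
      = fun x => (ball (y - η) r).indicator F (x + -η) := by
    funext x
    have hmem : x ∈ ball y r ↔ x + -η ∈ ball (y - η) r := by
      simp only [mem_ball, dist_eq_norm, ← sub_eq_add_neg]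
      rw [sub_sub_sub_cancel_right]
    by_cases hx : x ∈ ball y r
    · rw [Set.indicator_of_mem hx, Set.indicator_of_mem (hmem.mp hx), sub_eq_add_neg]
    · rw [Set.indicator_of_notMem hx, Set.indicator_of_notMem (fun h => hx (hmem.mpr h))]
  rw [key, lintegral_add_right_eq_self (μ := volume) ((ball (y - η) r).indicator F) (-η)]

lemma mor_rpow_inv_eq (p : ℝ) (hp : p ≠ 0) (d : ℝ≥0∞) : (d ^ (1/p)) ^ p = d := by
  rw [← ENNReal.rpow_mul, one_div_mul_cancel hp, ENNReal.rpow_one]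

lemma mor_translate (n : ℕ) (p : ℝ) (hp : 1 ≤ p)
    (F : EuclideanSpace ℝ (Fin n) → ℂ) (hFm : Measurable F)
    (hF : MemLp F (ENNReal.ofReal p) volume) :
    Tendsto (fun η : EuclideanSpace ℝ (Fin n) =>
      ∫⁻ x, (‖F (x - η) - F x‖₊ : ℝ≥0∞) ^ p) (nhds 0) (nhds 0) := by
  have hp0 : (0:ℝ) < p := one_pos.trans_le hp
  rw [ENNReal.tendsto_nhds_zero]
  intro ε hε
  set ε₀ := min ε 1 with hε₀def
  have hε₀pos : 0 < ε₀ := lt_min hε one_pos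
  have hε₀top : ε₀ ≠ ⊤ := ((min_le_right ε 1).trans_lt ENNReal.one_lt_top).ne
  set A2 : ℝ≥0∞ := (2:ℝ≥0∞) ^ p * (2:ℝ≥0∞) ^ p with hA2def
  have h2ne0 : ((2:ℝ≥0∞) ^ p) ≠ 0 := (ENNReal.rpow_pos (by norm_num) ENNReal.ofNat_ne_top).ne'
  have h2top : ((2:ℝ≥0∞) ^ p) ≠ ⊤ := ENNReal.rpow_ne_top_of_nonneg hp0.le ENNReal.ofNat_ne_top
  have hA2ne0 : A2 ≠ 0 := mul_ne_zero h2ne0 h2ne0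
  have hA2top : A2 ≠ ⊤ := ENNReal.mul_ne_top h2top h2top
  have h2one : (1:ℝ≥0∞) ≤ (2:ℝ≥0∞) ^ p := by
    calc (1:ℝ≥0∞) = 1 ^ p := (ENNReal.one_rpow p).symm
    _ ≤ (2:ℝ≥0∞) ^ p := ENNReal.rpow_le_rpow (by norm_num) hp0.le
  set d := ε₀ / (3 * A2) with hddef
  have hdne0 : d ≠ 0 := (ENNReal.div_pos hε₀pos.ne' (by finiteness)).ne'
  have hdtop : d ≠ ⊤ := by
    refine (ENNReal.div_lt_top hε₀top ?_).ne
    simp [hA2ne0]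
  -- density
  have hqne0 : (ENNReal.ofReal p) ≠ 0 := (ENNReal.ofReal_pos.mpr hp0).ne'
  have hqtop : (ENNReal.ofReal p) ≠ ⊤ := ENNReal.ofReal_ne_top
  have hεd : (d ^ (1/p)) ≠ 0 := by
    simpa using (ENNReal.rpow_pos (pos_iff_ne_zero.mpr hdne0) hdtop).ne'
  obtain ⟨g, g_supp, hg_close, g_cont, g_mem⟩ :=
    hF.exists_hasCompactSupport_eLpNorm_sub_le hqtop hεd
  -- J := ∫ ‖F-g‖^p ≤ d
  have hJ : (∫⁻ x, (‖F x - g x‖₊ : ℝ≥0∞) ^ p) ≤ d := by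
    rw [eLpNorm_eq_lintegral_rpow_enorm_toReal hqne0 hqtop, ENNReal.toReal_ofReal hp0.le] at hg_close
    have h2 := ENNReal.rpow_le_rpow hg_close hp0.le
    rw [mor_rpow_inv_eq p hp0.ne' , mor_rpow_inv_eq p hp0.ne'] at h2
    simp only [Pi.sub_apply] at h2; exact h2
  -- uniform continuity of g
  have g_uc : UniformContinuous g :=
    g_cont.uniformContinuous_of_tendsto_cocompact g_supp.is_zero_at_infty
  obtain ⟨Rg, hRg⟩ := g_supp.isBounded.subset_closedBall 0
  set R₀ : ℝ := max Rg 0 with hR₀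
  set s : Set (EuclideanSpace ℝ (Fin n)) := closedBall 0 (R₀ + 1) with hs
  have hsm : MeasurableSet s := measurableSet_closedBall
  set c₂ : ℝ≥0∞ := volume s + 1 with hc₂
  have hc₂ne0 : c₂ ≠ 0 := by simp [hc₂]
  have hc₂top : c₂ ≠ ⊤ := by
    refine ENNReal.add_ne_top.mpr ⟨?_, by norm_num⟩
    exact ((isCompact_closedBall _ _).measure_lt_top).ne
  set m : ℝ≥0∞ := (d / c₂) ^ (1/p) with hm
  have hmne0 : m ≠ 0 := by
    simpa [hm] using (ENNReal.rpow_pos (ENNReal.div_pos hdne0 hc₂top) ((ENNReal.div_lt_top hdtop hc₂ne0).ne)).ne'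
  have hmtop : m ≠ ⊤ := by
    refine (ENNReal.rpow_lt_top_of_nonneg (by positivity) ?_).ne
    exact (ENNReal.div_lt_top hdtop hc₂ne0).ne
  set κ : ℝ := m.toReal with hκ
  have hκpos : 0 < κ := ENNReal.toReal_pos hmne0 hmtop
  obtain ⟨δ', hδ'pos, Hδ'⟩ := Metric.uniformContinuous_iff.mp g_uc κ hκpos
  filter_upwards [Metric.ball_mem_nhds (0 : EuclideanSpace ℝ (Fin n))
    (lt_min hδ'pos one_pos)] with η hη
  rw [mem_ball_zero_iff] at hη
  have hηδ : ‖η‖ < δ' := hη.trans_le (min_le_left _ _)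
  have hη1 : ‖η‖ ≤ 1 := (hη.trans_le (min_le_right _ _)).le
  -- K bound
  have hK : (∫⁻ x, (‖g (x - η) - g x‖₊ : ℝ≥0∞) ^ p) ≤ d := by
    have hpt : ∀ x, (‖g (x - η) - g x‖₊ : ℝ≥0∞) ^ p
        ≤ s.indicator (fun _ => d / c₂) x := by
      intro x
      by_cases hx : x ∈ s
      · rw [Set.indicator_of_mem hx]
        have hd1 : dist (x - η) x < δ' := by
          rw [dist_eq_norm, sub_sub_cancel_left, norm_neg]; exact hηδ
        have h2 := (Hδ' hd1).le
        rw [dist_eq_norm] at h2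
        calc (‖g (x - η) - g x‖₊ : ℝ≥0∞) ^ p
            ≤ m ^ p := by
              refine ENNReal.rpow_le_rpow ?_ hp0.le
              rw [← enorm_eq_nnnorm, ← ofReal_norm]
              calc ENNReal.ofReal ‖g (x - η) - g x‖ ≤ ENNReal.ofReal κ :=
                    ENNReal.ofReal_le_ofReal h2
                _ ≤ m := by rw [hκ, ENNReal.ofReal_toReal hmtop]
          _ = d / c₂ := mor_rpow_inv_eq p hp0.ne' _
      · rw [Set.indicator_of_notMem hx]
        have hxnorm : R₀ + 1 < ‖x‖ := by
          by_contra hcon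
          exact hx (mem_closedBall_zero_iff.mpr (not_lt.mp hcon))
        have hgx : g x = 0 := by
          by_contra hgx
          have := hRg (subset_tsupport g hgx)
          rw [mem_closedBall_zero_iff] at this
          linarith [le_max_left Rg (0:ℝ), this]
        have hgxη : g (x - η) = 0 := by
          by_contra hgx
          have h3 := hRg (subset_tsupport g hgx)
          rw [mem_closedBall_zero_iff] at h3
          have h4 : ‖x‖ - ‖η‖ ≤ ‖x - η‖ := by
            have := norm_sub_norm_le x (x - η)
            simpa [_root_.sub_sub_cancel, add_comm] using this
          have h5 : Rg ≤ R₀ := le_max_left _ _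
          linarith
        simp [hgx, hgxη, ENNReal.zero_rpow_of_pos hp0]
    calc (∫⁻ x, (‖g (x - η) - g x‖₊ : ℝ≥0∞) ^ p)
        ≤ ∫⁻ x, s.indicator (fun _ => d / c₂) x := lintegral_mono hpt
      _ = (d / c₂) * volume s := by
          rw [lintegral_indicator hsm, setLIntegral_const]
      _ ≤ (d / c₂) * c₂ := by
          refine mul_le_mul_right ?_ _
          exact le_self_add
      _ ≤ d := by rw [mul_comm]; exact ENNReal.mul_div_le
  -- measurability
  have hXm : Measurable (fun x : EuclideanSpace ℝ (Fin n) =>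
      (‖F (x - η) - g (x - η)‖₊ : ℝ≥0∞) ^ p) := by
    have : Measurable fun x : EuclideanSpace ℝ (Fin n) => x - η :=
      measurable_id.sub measurable_const
    exact ENNReal.continuous_rpow_const.measurable.comp
      (((hFm.sub g_cont.measurable).comp this).nnnorm.coe_nnreal_ennreal)
  have hYm : Measurable (fun x : EuclideanSpace ℝ (Fin n) =>
      (‖g (x - η) - g x‖₊ : ℝ≥0∞) ^ p) := by
    have h1 : Measurable fun x : EuclideanSpace ℝ (Fin n) => x - η :=
      measurable_id.sub measurable_const
    exact ENNReal.continuous_rpow_const.measurable.comp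
      ((((g_cont.measurable.comp h1).sub g_cont.measurable)).nnnorm.coe_nnreal_ennreal)
  -- main pointwise bound
  have hpt : ∀ x, (‖F (x - η) - F x‖₊ : ℝ≥0∞) ^ p
      ≤ A2 * ((‖F (x - η) - g (x - η)‖₊ : ℝ≥0∞) ^ p
        + ((‖g (x - η) - g x‖₊ : ℝ≥0∞) ^ p + (‖F x - g x‖₊ : ℝ≥0∞) ^ p)) := by
    intro x
    have e1 : F (x - η) - F x
        = (F (x - η) - g (x - η)) + ((g (x - η) - g x) - (F x - g x)) := by ring
    calc (‖F (x - η) - F x‖₊ : ℝ≥0∞) ^ p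
        ≤ 2 ^ p * ((‖F (x - η) - g (x - η)‖₊ : ℝ≥0∞) ^ p
            + (‖(g (x - η) - g x) - (F x - g x)‖₊ : ℝ≥0∞) ^ p) := by
          rw [e1]; exact mor_aux_nnnorm_add p hp0.le _ _
      _ ≤ 2 ^ p * ((‖F (x - η) - g (x - η)‖₊ : ℝ≥0∞) ^ p
            + 2 ^ p * ((‖g (x - η) - g x‖₊ : ℝ≥0∞) ^ p + (‖F x - g x‖₊ : ℝ≥0∞) ^ p)) := by
          gcongr
          exact mor_aux_nnnorm_sub p hp0.le _ _
      _ ≤ A2 * ((‖F (x - η) - g (x - η)‖₊ : ℝ≥0∞) ^ p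
            + ((‖g (x - η) - g x‖₊ : ℝ≥0∞) ^ p + (‖F x - g x‖₊ : ℝ≥0∞) ^ p)) := by
          set U := (‖F (x - η) - g (x - η)‖₊ : ℝ≥0∞) ^ p
          set V := (‖g (x - η) - g x‖₊ : ℝ≥0∞) ^ p
          set W := (‖F x - g x‖₊ : ℝ≥0∞) ^ p
          calc 2 ^ p * (U + 2 ^ p * (V + W)) = 2 ^ p * U + A2 * (V + W) := by
                rw [mul_add, hA2def, mul_assoc]
            _ ≤ A2 * U + A2 * (V + W) := by
                gcongr
                exact le_mul_of_one_le_left' h2one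
            _ = A2 * (U + (V + W)) := (mul_add _ _ _).symm
  -- conclude
  have hX : (∫⁻ x, (‖F (x - η) - g (x - η)‖₊ : ℝ≥0∞) ^ p) ≤ d := by
    have := mor_shift_univ n (fun z => (‖F z - g z‖₊ : ℝ≥0∞) ^ p) η
    rw [this]; exact hJ
  calc (∫⁻ x, (‖F (x - η) - F x‖₊ : ℝ≥0∞) ^ p)
      ≤ ∫⁻ x, A2 * ((‖F (x - η) - g (x - η)‖₊ : ℝ≥0∞) ^ p
        + ((‖g (x - η) - g x‖₊ : ℝ≥0∞) ^ p + (‖F x - g x‖₊ : ℝ≥0∞) ^ p)) :=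
        lintegral_mono hpt
    _ = A2 * ((∫⁻ x, (‖F (x - η) - g (x - η)‖₊ : ℝ≥0∞) ^ p)
        + ((∫⁻ x, (‖g (x - η) - g x‖₊ : ℝ≥0∞) ^ p)
          + ∫⁻ x, (‖F x - g x‖₊ : ℝ≥0∞) ^ p)) := by
        rw [lintegral_const_mul' _ _ hA2top, lintegral_add_left hXm, lintegral_add_left hYm]
    _ ≤ A2 * (d + (d + d)) := by gcongr
    _ = 3 * A2 * d := by ring
    _ ≤ ε₀ := by
        rw [hddef]
        exact ENNReal.mul_div_le
    _ ≤ ε := min_le_left ε 1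

/-- `L^{p,β}_{0,∞,*}(ℝⁿ) ⊂ 𝕃^{p,β}(ℝⁿ)`: a Morrey function lying in all three vanishing
subspaces has continuous translations in the Morrey norm. -/
theorem vanishing_subspaces_translation_continuous (n : ℕ) (hn : 1 ≤ n) (p β : ℝ)
    (hp : 1 ≤ p) (hβ : 0 ≤ β) (hβn : β < n)
    (f : EuclideanSpace ℝ (Fin n) → ℂ) (hf : Measurable f)
    (hfM : morreyNorm n p β f < ⊤)
    (h0 : vanishAtOrigin n p β f) (hi : vanishAtInfinity n p β f)
    (hs : vanishTrunc n p β f) :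
    Tendsto (fun η : EuclideanSpace ℝ (Fin n) =>
        morreyNorm n p β (fun x => f (x - η) - f x))
      (nhds 0) (nhds 0) := by
  have hp0 : (0:ℝ) < p := one_pos.trans_le hp
  have h1p : (0:ℝ) ≤ 1/p := by positivity
  have h2ne0 : ((2:ℝ≥0∞) ^ p) ≠ 0 := (ENNReal.rpow_pos (by norm_num) ENNReal.ofNat_ne_top).ne'
  have h2top : ((2:ℝ≥0∞) ^ p) ≠ ⊤ := ENNReal.rpow_ne_top_of_nonneg hp0.le ENNReal.ofNat_ne_top
  -- finiteness of morreyA's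
  have hAfin : ∀ (y : EuclideanSpace ℝ (Fin n)) (r : ℝ), 0 < r → morreyA n p β f y r < ⊤ := by
    intro y r hr
    have h1 : (morreyA n p β f y r) ^ (1/p) ≤ morreyNorm n p β f := by
      simp only [morreyNorm]
      exact le_iSup_of_le y (le_iSup_of_le r (le_iSup_of_le hr le_rfl))
    have h2 := ENNReal.rpow_le_rpow h1 hp0.le
    rw [mor_rpow_inv_eq p hp0.ne'] at h2
    exact h2.trans_lt (ENNReal.rpow_lt_top_of_nonneg hp0.le hfM.ne)
  rw [ENNReal.tendsto_nhds_zero]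
  intro ε hε
  set ε₀ := min ε 1 with hε₀def
  have hε₀pos : 0 < ε₀ := lt_min hε one_pos
  have hε₀top : ε₀ ≠ ⊤ := ((min_le_right ε 1).trans_lt ENNReal.one_lt_top).ne
  set c := ε₀ ^ p with hcdef
  have hcpos : 0 < c := ENNReal.rpow_pos hε₀pos hε₀top
  have hc2pos : (0:ℝ≥0∞) < c/2 := ENNReal.div_pos hcpos.ne' (by norm_num)
  -- choose δ
  set d1 := (c/2) / (2 * ((2:ℝ≥0∞)^p)) with hd1def
  have hd1pos : 0 < d1 := ENNReal.div_pos hc2pos.ne' (by finiteness)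
  obtain ⟨δ, hδ1, hδpos⟩ := ((ENNReal.tendsto_nhds_zero.mp h0 d1 hd1pos).and
    eventually_mem_nhdsWithin).exists
  rw [Set.mem_Ioi] at hδpos
  -- choose N
  set d2 := (c/2) / (2 * ((2:ℝ≥0∞)^p * (2:ℝ≥0∞)^p)) with hd2def
  have hd2pos : 0 < d2 := ENNReal.div_pos hc2pos.ne' (by finiteness)
  obtain ⟨N, hN1⟩ := (ENNReal.tendsto_nhds_zero.mp hs d2 hd2pos).exists
  -- the truncation set and bulk part
  set sN : Set (EuclideanSpace ℝ (Fin n)) := {x | N < ‖x‖} with hsNdef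
  have hsNm : MeasurableSet sN := (isOpen_lt continuous_const continuous_norm).measurableSet
  set FN : EuclideanSpace ℝ (Fin n) → ℂ := Set.indicator sNᶜ f with hFNdef
  have hFNm : Measurable FN := hf.indicator hsNm.compl
  -- FN is in L^p
  have hFN_int : (∫⁻ x, (‖FN x‖₊ : ℝ≥0∞) ^ p) < ⊤ := by
    have hpt : ∀ x, (‖FN x‖₊ : ℝ≥0∞) ^ p
        ≤ (ball (0 : EuclideanSpace ℝ (Fin n)) (|N|+1)).indicator
            (fun x => (‖f x‖₊ : ℝ≥0∞) ^ p) x := by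
      intro x
      by_cases hx : x ∈ sN
      · have : FN x = 0 := Set.indicator_of_notMem (by simpa using hx) f
        simp [this, ENNReal.zero_rpow_of_pos hp0]
      · have h1 : FN x = f x := Set.indicator_of_mem (by simpa using hx) f
        have h2 : x ∈ ball (0 : EuclideanSpace ℝ (Fin n)) (|N|+1) := by
          rw [mem_ball_zero_iff]
          have : ‖x‖ ≤ N := by simpa [hsNdef] using hx
          have := this.trans (le_abs_self N)
          linarith
        rw [h1, Set.indicator_of_mem h2]
    have hIball : (∫⁻ x in ball (0 : EuclideanSpace ℝ (Fin n)) (|N|+1),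
        (‖f x‖₊ : ℝ≥0∞) ^ p) ≠ ⊤ := by
      intro htop
      have h2 := hAfin 0 (|N|+1) (by positivity)
      have hofr : ENNReal.ofReal ((|N|+1) ^ (-β)) ≠ 0 :=
        (ENNReal.ofReal_pos.mpr (Real.rpow_pos_of_pos (by positivity) _)).ne'
      rw [morreyA, htop, ENNReal.mul_top hofr] at h2
      exact lt_irrefl _ h2
    calc (∫⁻ x, (‖FN x‖₊ : ℝ≥0∞) ^ p)
        ≤ ∫⁻ x, (ball (0 : EuclideanSpace ℝ (Fin n)) (|N|+1)).indicator
            (fun x => (‖f x‖₊ : ℝ≥0∞) ^ p) x := lintegral_mono hpt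
      _ = ∫⁻ x in ball (0 : EuclideanSpace ℝ (Fin n)) (|N|+1), (‖f x‖₊ : ℝ≥0∞) ^ p :=
          lintegral_indicator measurableSet_ball _
      _ < ⊤ := hIball.lt_top
  have hFNmem : MemLp FN (ENNReal.ofReal p) volume := by
    constructor
    · exact hFNm.aestronglyMeasurable
    · rw [eLpNorm_eq_lintegral_rpow_enorm_toReal (ENNReal.ofReal_pos.mpr hp0).ne'
        ENNReal.ofReal_ne_top, ENNReal.toReal_ofReal hp0.le]
      exact ENNReal.rpow_lt_top_of_nonneg h1p hFN_int.ne
  -- translation continuity for FN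
  set d3 := (c/2) / ((2:ℝ≥0∞)^p * (ENNReal.ofReal (δ ^ (-β)) + 1)) with hd3def
  have hd3pos : 0 < d3 := ENNReal.div_pos hc2pos.ne' (by finiteness)
  have htr := ENNReal.tendsto_nhds_zero.mp
    (mor_translate n p hp FN hFNm hFNmem) d3 hd3pos
  filter_upwards [htr] with η hIη
  refine le_trans ?_ (min_le_left ε 1)
  simp only [morreyNorm]
  refine iSup_le fun y => iSup_le fun r => iSup_le fun hr => ?_
  have key : morreyA n p β (fun x => f (x - η) - f x) y r ≤ c := by
    have hshiftm : Measurable fun x : EuclideanSpace ℝ (Fin n) => x - η :=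
      measurable_id.sub measurable_const
    rcases le_total r δ with hrδ | hδr
    -- Case 1 : r ≤ δ, use vanishing at the origin
    · have hub : ∀ z : EuclideanSpace ℝ (Fin n), morreyA n p β f z r ≤ d1 := by
        intro z
        refine le_trans ?_ hδ1
        refine le_trans ?_ (le_iSup _ z)
        refine le_trans ?_ (le_iSup _ r)
        refine le_trans ?_ (le_iSup (fun _ : 0 < r =>
          ⨆ (_ : r ≤ δ), morreyA n p β f z r) hr)
        exact le_iSup (fun _ : r ≤ δ => morreyA n p β f z r) hrδ
      have hm1 : Measurable fun x : EuclideanSpace ℝ (Fin n) => (‖f (x - η)‖₊ : ℝ≥0∞) ^ p :=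
        ENNReal.continuous_rpow_const.measurable.comp
          ((hf.comp hshiftm).nnnorm.coe_nnreal_ennreal)
      simp only [morreyA]
      calc ENNReal.ofReal (r ^ (-β))
            * ∫⁻ x in ball y r, (‖f (x - η) - f x‖₊ : ℝ≥0∞) ^ p
          ≤ ENNReal.ofReal (r ^ (-β)) * ∫⁻ x in ball y r,
              (2:ℝ≥0∞)^p * ((‖f (x - η)‖₊ : ℝ≥0∞) ^ p + (‖f x‖₊ : ℝ≥0∞) ^ p) := by
            refine mul_le_mul_right (lintegral_mono fun x => ?_) _
            exact mor_aux_nnnorm_sub p hp0.le _ _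
        _ = (2:ℝ≥0∞)^p * (ENNReal.ofReal (r ^ (-β))
              * ((∫⁻ x in ball y r, (‖f (x - η)‖₊ : ℝ≥0∞) ^ p)
                + ∫⁻ x in ball y r, (‖f x‖₊ : ℝ≥0∞) ^ p)) := by
            rw [lintegral_const_mul' _ _ h2top, lintegral_add_left hm1]
            ring
        _ = (2:ℝ≥0∞)^p * (morreyA n p β f (y - η) r + morreyA n p β f y r) := by
            rw [mor_shift_ball n (fun z => (‖f z‖₊ : ℝ≥0∞) ^ p) η y r]
            simp only [morreyA]
            ring
        _ ≤ (2:ℝ≥0∞)^p * (d1 + d1) := by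
            gcongr
            · exact hub _
            · exact hub _
        _ = 2 * ((2:ℝ≥0∞)^p) * d1 := by ring
        _ ≤ c/2 := by rw [hd1def]; exact ENNReal.mul_div_le
        _ ≤ c := ENNReal.half_le_self
    -- Case 2 : δ ≤ r, split into bulk and tail
    · have hofr : ENNReal.ofReal (r ^ (-β)) ≤ ENNReal.ofReal (δ ^ (-β)) :=
        ENNReal.ofReal_le_ofReal
          (Real.rpow_le_rpow_of_nonpos hδpos hδr (neg_nonpos.mpr hβ))
      -- decomposition
      have hdecomp : ∀ z : EuclideanSpace ℝ (Fin n), f (z - η) - f z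
          = (FN (z - η) - FN z) + (sN.indicator f (z - η) - sN.indicator f z) := by
        intro z
        have h1 : ∀ w, f w = FN w + sN.indicator f w := by
          intro w
          by_cases hw : w ∈ sN
          · rw [hFNdef, Set.indicator_of_notMem (by simpa using hw),
              Set.indicator_of_mem hw, zero_add]
          · rw [hFNdef, Set.indicator_of_mem (by simpa using hw),
              Set.indicator_of_notMem hw, add_zero]
        rw [h1 (z - η), h1 z]; ring
      -- pointwise bound
      have hpt : ∀ x, (‖f (x - η) - f x‖₊ : ℝ≥0∞) ^ p
          ≤ (2:ℝ≥0∞)^p * (‖FN (x - η) - FN x‖₊ : ℝ≥0∞) ^ p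
            + (2:ℝ≥0∞)^p * (2:ℝ≥0∞)^p * ((‖sN.indicator f (x - η)‖₊ : ℝ≥0∞) ^ p
              + (‖sN.indicator f x‖₊ : ℝ≥0∞) ^ p) := by
        intro x
        calc (‖f (x - η) - f x‖₊ : ℝ≥0∞) ^ p
            ≤ (2:ℝ≥0∞)^p * ((‖FN (x - η) - FN x‖₊ : ℝ≥0∞) ^ p
                + (‖sN.indicator f (x - η) - sN.indicator f x‖₊ : ℝ≥0∞) ^ p) := by
              rw [hdecomp x]; exact mor_aux_nnnorm_add p hp0.le _ _
          _ ≤ (2:ℝ≥0∞)^p * ((‖FN (x - η) - FN x‖₊ : ℝ≥0∞) ^ p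
                + (2:ℝ≥0∞)^p * ((‖sN.indicator f (x - η)‖₊ : ℝ≥0∞) ^ p
                  + (‖sN.indicator f x‖₊ : ℝ≥0∞) ^ p)) := by
              gcongr
              exact mor_aux_nnnorm_sub p hp0.le _ _
          _ = _ := by ring
      -- measurability for splitting the integral
      have hXm : Measurable fun x : EuclideanSpace ℝ (Fin n) =>
          (2:ℝ≥0∞)^p * (‖FN (x - η) - FN x‖₊ : ℝ≥0∞) ^ p := by
        refine Measurable.const_mul ?_ _
        exact ENNReal.continuous_rpow_const.measurable.comp
          (((hFNm.comp hshiftm).sub hFNm).nnnorm.coe_nnreal_ennreal)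
      have htailm : Measurable (sN.indicator f) := hf.indicator hsNm
      have hY1m : Measurable fun x : EuclideanSpace ℝ (Fin n) =>
          (‖sN.indicator f (x - η)‖₊ : ℝ≥0∞) ^ p :=
        ENNReal.continuous_rpow_const.measurable.comp
          ((htailm.comp hshiftm).nnnorm.coe_nnreal_ennreal)
      -- tail integrals are truncation quantities
      have hnorm_ind : ∀ w, (‖sN.indicator f w‖₊ : ℝ≥0∞) ^ p
          = sN.indicator (fun z => (‖f z‖₊ : ℝ≥0∞) ^ p) w := by
        intro w
        by_cases hw : w ∈ sN
        · rw [Set.indicator_of_mem hw, Set.indicator_of_mem hw]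
        · rw [Set.indicator_of_notMem hw, Set.indicator_of_notMem hw]
          simp [ENNReal.zero_rpow_of_pos hp0]
      have hind : ∀ z : EuclideanSpace ℝ (Fin n),
          (∫⁻ x in ball z r, sN.indicator (fun w => (‖f w‖₊ : ℝ≥0∞) ^ p) x)
          = ∫⁻ x in ball z r ∩ sN, (‖f x‖₊ : ℝ≥0∞) ^ p := by
        intro z
        rw [lintegral_indicator hsNm, Measure.restrict_restrict hsNm, Set.inter_comm]
      have htrunc : ∀ z : EuclideanSpace ℝ (Fin n),
          ENNReal.ofReal (r ^ (-β)) * (∫⁻ x in ball z r ∩ sN, (‖f x‖₊ : ℝ≥0∞) ^ p) ≤ d2 := by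
        intro z
        refine le_trans ?_ hN1
        refine le_trans ?_ (le_iSup _ z)
        refine le_trans ?_ (le_iSup _ r)
        exact le_iSup (fun _ : 0 < r => ENNReal.ofReal (r ^ (-β))
          * ∫⁻ x in ball z r ∩ sN, (‖f x‖₊ : ℝ≥0∞) ^ p) hr
      simp only [morreyA]
      calc ENNReal.ofReal (r ^ (-β))
            * ∫⁻ x in ball y r, (‖f (x - η) - f x‖₊ : ℝ≥0∞) ^ p
          ≤ ENNReal.ofReal (r ^ (-β)) * ∫⁻ x in ball y r,
              ((2:ℝ≥0∞)^p * (‖FN (x - η) - FN x‖₊ : ℝ≥0∞) ^ p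
              + (2:ℝ≥0∞)^p * (2:ℝ≥0∞)^p * ((‖sN.indicator f (x - η)‖₊ : ℝ≥0∞) ^ p
                + (‖sN.indicator f x‖₊ : ℝ≥0∞) ^ p)) := by
            exact mul_le_mul_right (lintegral_mono fun x => hpt x) _
        _ = (2:ℝ≥0∞)^p * (ENNReal.ofReal (r ^ (-β))
              * ∫⁻ x in ball y r, (‖FN (x - η) - FN x‖₊ : ℝ≥0∞) ^ p)
            + (2:ℝ≥0∞)^p * (2:ℝ≥0∞)^p
              * ((ENNReal.ofReal (r ^ (-β))
                  * ∫⁻ x in ball y r, (‖sN.indicator f (x - η)‖₊ : ℝ≥0∞) ^ p)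
                + ENNReal.ofReal (r ^ (-β))
                  * ∫⁻ x in ball y r, (‖sN.indicator f x‖₊ : ℝ≥0∞) ^ p) := by
            rw [lintegral_add_left hXm, lintegral_const_mul' _ _ h2top,
              lintegral_const_mul' _ _ (by finiteness), lintegral_add_left hY1m]
            ring
        _ ≤ (2:ℝ≥0∞)^p * (ENNReal.ofReal (δ ^ (-β)) + 1) * d3
            + (2:ℝ≥0∞)^p * (2:ℝ≥0∞)^p * (d2 + d2) := by
            have htail1 : ENNReal.ofReal (r ^ (-β))
                * (∫⁻ x in ball y r, (‖sN.indicator f (x - η)‖₊ : ℝ≥0∞) ^ p) ≤ d2 := by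
              have e : (∫⁻ x in ball y r, (‖sN.indicator f (x - η)‖₊ : ℝ≥0∞) ^ p)
                  = ∫⁻ x in ball (y - η) r ∩ sN, (‖f x‖₊ : ℝ≥0∞) ^ p := by
                calc (∫⁻ x in ball y r, (‖sN.indicator f (x - η)‖₊ : ℝ≥0∞) ^ p)
                    = ∫⁻ x in ball y r,
                        sN.indicator (fun z => (‖f z‖₊ : ℝ≥0∞) ^ p) (x - η) :=
                      lintegral_congr fun x => hnorm_ind _
                  _ = ∫⁻ x in ball (y - η) r,
                        sN.indicator (fun z => (‖f z‖₊ : ℝ≥0∞) ^ p) x :=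
                      mor_shift_ball n _ η y r
                  _ = _ := hind (y - η)
              rw [e]; exact htrunc (y - η)
            have htail2 : ENNReal.ofReal (r ^ (-β))
                * (∫⁻ x in ball y r, (‖sN.indicator f x‖₊ : ℝ≥0∞) ^ p) ≤ d2 := by
              have e : (∫⁻ x in ball y r, (‖sN.indicator f x‖₊ : ℝ≥0∞) ^ p)
                  = ∫⁻ x in ball y r ∩ sN, (‖f x‖₊ : ℝ≥0∞) ^ p := by
                calc (∫⁻ x in ball y r, (‖sN.indicator f x‖₊ : ℝ≥0∞) ^ p)
                    = ∫⁻ x in ball y r,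
                        sN.indicator (fun z => (‖f z‖₊ : ℝ≥0∞) ^ p) x :=
                      lintegral_congr fun x => hnorm_ind _
                  _ = _ := hind y
              rw [e]; exact htrunc y
            refine add_le_add ?_ (mul_le_mul_right (add_le_add htail1 htail2) _)
            calc (2:ℝ≥0∞)^p * (ENNReal.ofReal (r ^ (-β))
                  * ∫⁻ x in ball y r, (‖FN (x - η) - FN x‖₊ : ℝ≥0∞) ^ p)
                ≤ (2:ℝ≥0∞)^p * (ENNReal.ofReal (δ ^ (-β))
                  * ∫⁻ x, (‖FN (x - η) - FN x‖₊ : ℝ≥0∞) ^ p) :=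
                  mul_le_mul_right (mul_le_mul' hofr (setLIntegral_le_lintegral _ _)) _
              _ ≤ (2:ℝ≥0∞)^p * (ENNReal.ofReal (δ ^ (-β)) * d3) :=
                  mul_le_mul_right (mul_le_mul_right hIη _) _
              _ = ((2:ℝ≥0∞)^p * ENNReal.ofReal (δ ^ (-β))) * d3 := (mul_assoc _ _ _).symm
              _ ≤ (2:ℝ≥0∞)^p * (ENNReal.ofReal (δ ^ (-β)) + 1) * d3 :=
                  mul_le_mul_left (mul_le_mul_right le_self_add _) _
        _ ≤ c/2 + c/2 := by
            refine add_le_add ?_ ?_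
            · rw [hd3def]; exact ENNReal.mul_div_le
            · have e2 : (2:ℝ≥0∞)^p * (2:ℝ≥0∞)^p * (d2 + d2)
                  = (2 * ((2:ℝ≥0∞)^p * (2:ℝ≥0∞)^p)) * d2 := by ring
              rw [e2, hd2def]; exact ENNReal.mul_div_le
        _ = c := ENNReal.add_halves c
  calc (morreyA n p β (fun x => f (x - η) - f x) y r) ^ (1/p)
      ≤ c ^ (1/p) := ENNReal.rpow_le_rpow key h1p
    _ = ε₀ := by rw [hcdef, ← ENNReal.rpow_mul, mul_one_div_cancel hp0.ne', ENNReal.rpow_one]
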